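/- arXiv:1805.06365 — 5 statements merged into one kernel-verified Lean document; each statement's English description precedes it below -/
import Mathlib

section
/- Let H be a complex Hilbert space and let L be a bounded self-adjoint operator on H. Let λ be a nonzero complex number with |arg λ| < π (i.e. λ does not lie on the closed negative real axis), and let √λ denote the principal branch of the square root. Then the operator I + i·(√(2λ)/2)·L is invertible in the algebra of bounded operators on H, and its inverse satisfies the operator norm bound ‖(I + i·(√(2λ)/2)·L)^{-1}‖ ≤ 1/cos((arg λ)/2). -/
/-- Let `H` be a complex Hilbert space and `L` a bounded self-adjoint
operator on `H`. For `λ ≠ 0` with `|arg λ| < π` (principal argument), the operator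
`I + i·(√(2λ)/2)·L` (principal square root) is invertible and its inverse has operator norm
at most `1 / cos((arg λ)/2)`. -/
theorem stmt0 {H : Type*} [NormedAddCommGroup H] [InnerProductSpace ℂ H] [CompleteSpace H]
    (L : H →L[ℂ] H) (hL : IsSelfAdjoint L)
    (lam : ℂ) (hlam : lam ≠ 0) (harg : |lam.arg| < Real.pi) :
    IsUnit (1 + ((Complex.I * (2 * lam) ^ (1 / 2 : ℂ)) / 2) • L) ∧
      ‖Ring.inverse (1 + ((Complex.I * (2 * lam) ^ (1 / 2 : ℂ)) / 2) • L)‖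
        ≤ 1 / Real.cos (lam.arg / 2) := by
  have hN : IsStarNormal L := hL.isStarNormal
  set μ : ℂ := (Complex.I * (2 * lam) ^ (1 / 2 : ℂ)) / 2 with hμ
  have h2lam : (2 : ℂ) * lam ≠ 0 := mul_ne_zero two_ne_zero hlam
  set c : ℂ := (2 * lam) ^ (1 / 2 : ℂ) with hc
  have hcexp : c = Complex.exp (Complex.log (2 * lam) * (1 / 2)) :=
    Complex.cpow_def_of_ne_zero h2lam _
  have harg2 : (2 * lam).arg = lam.arg := by
    have := Complex.arg_real_mul lam (by norm_num : (0:ℝ) < 2)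
    simpa using this
  set E : ℝ := Real.exp (Real.log ‖2 * lam‖ / 2) with hE'
  have hE : 0 < E := Real.exp_pos _
  have hcre : c.re = E * Real.cos (lam.arg / 2) := by
    rw [hcexp, Complex.exp_re]
    simp [Complex.mul_re, Complex.mul_im, Complex.log_re, Complex.log_im, harg2, hE']
    ring_nf
  have hcim : c.im = E * Real.sin (lam.arg / 2) := by
    rw [hcexp, Complex.exp_im]
    simp [Complex.mul_re, Complex.mul_im, Complex.log_re, Complex.log_im, harg2, hE']
    ring_nf
  have hμre : μ.re = -c.im / 2 := by
    simp [hμ, ← hc, Complex.div_re, Complex.mul_re, Complex.normSq_apply]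
  have hμim : μ.im = c.re / 2 := by
    simp [hμ, ← hc, Complex.div_im, Complex.mul_im, Complex.normSq_apply]
  have hco : 0 < Real.cos (lam.arg / 2) := by
    apply Real.cos_pos_of_mem_Ioo
    constructor
    · linarith [abs_lt.mp harg |>.1]
    · linarith [abs_lt.mp harg |>.2]
  have key : ∀ t : ℝ, Real.cos (lam.arg / 2) ≤ ‖1 + μ * t‖ := by
    intro t
    have habs : ‖1 + μ * t‖ =
        Real.sqrt ((1 + μ.re * t) ^ 2 + (μ.im * t) ^ 2) := by
      rw [Complex.norm_def, Complex.normSq_apply]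
      simp only [Complex.add_re, Complex.add_im, Complex.one_re, Complex.one_im,
        Complex.mul_re, Complex.mul_im, Complex.ofReal_re, Complex.ofReal_im]
      ring_nf
    rw [habs, Real.le_sqrt hco.le]
    rw [hμre, hμim, hcre, hcim]
    have hpy := Real.sin_sq_add_cos_sq (lam.arg / 2)
    nlinarith [sq_nonneg (Real.sin (lam.arg / 2) - t * E / 2)]
    positivity
  have hf' : ∀ z ∈ spectrum ℂ L, (1 + μ * z) ≠ 0 := by
    intro z hz h0
    have hzre := hL.mem_spectrum_eq_re hz
    have := key z.re
    rw [← hzre, h0] at this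
    simp at this
    linarith
  have hcont : ContinuousOn (fun z : ℂ => 1 + μ * z) (spectrum ℂ L) :=
    (continuous_const.add (continuous_const.mul continuous_id)).continuousOn
  have hT : (1 : H →L[ℂ] H) + μ • L = cfc (fun z : ℂ => 1 + μ * z) L := by
    rw [cfc_const_add (1 : ℂ) (fun z : ℂ => μ * z) L
      ((continuous_const.mul continuous_id).continuousOn) hN, cfc_const_mul_id μ L]
    simp
  have hunit : IsUnit ((1 : H →L[ℂ] H) + μ • L) := by
    rw [hT]
    exact isUnit_cfc _ L hcont hN hf'
  refine ⟨hunit, ?_⟩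
  have hinv : Ring.inverse ((1 : H →L[ℂ] H) + μ • L)
      = cfc (fun z : ℂ => (1 + μ * z)⁻¹) L := by
    rw [hT, cfc_inv _ L hf' hcont hN]
  rw [hinv]
  refine norm_cfc_le (by positivity) ?_
  intro z hz
  have h1 : Real.cos (lam.arg / 2) ≤ ‖1 + μ * z‖ := by
    have hzre := hL.mem_spectrum_eq_re hz
    rw [hzre]
    exact key z.re
  rw [norm_inv, one_div]
  exact inv_anti₀ hco h1
end

section
/- Let 0 < ρ < 1 and let λ belong to the cardioid domain Card_ρ = {λ ∈ ℂ : λ ≠ 0, |arg λ| < π, |λ| < ρ·cos²((arg λ)/2)}. Let H be a complex Hilbert space and L a bounded self-adjoint operator on H. Then the operator √λ·(I + i·(√(2λ)/2)·L)^{-1} is well defined and its operator norm is strictly less than √ρ. -/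
lemma aux_mem_spec {A : Type*} [CStarAlgebra A] [StarModule ℂ A] (L : A) (hL : IsSelfAdjoint L)
    {μ : ℂ} (hμ : μ ≠ 0) {z : ℂ} (hz : z ∈ spectrum ℂ (1 + μ • L)) :
    ∃ t : ℝ, z = 1 + μ * t := by
  have h2 : z - 1 ∈ spectrum ℂ (μ • L) := by
    have h3 : (z - 1) + 1 ∈ spectrum ℂ (1 + μ • L) := by rwa [sub_add_cancel]
    have h4 := (spectrum.add_mem_iff).mp h3
    have h5 : -(algebraMap ℂ A 1) + (1 + μ • L) = μ • L := by
      rw [map_one]; abel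
    rwa [h5] at h4
  set u : ℂˣ := Units.mk0 μ hμ with hu
  have h6 : μ⁻¹ * (z - 1) ∈ spectrum ℂ L := by
    have h7 : u • (μ⁻¹ * (z - 1)) ∈ spectrum ℂ (u • L) := by
      have e1 : u • (μ⁻¹ * (z - 1)) = z - 1 := by
        simp only [hu, Units.smul_def, Units.val_mk0, smul_eq_mul]
        field_simp
      have e2 : u • L = μ • L := by simp [hu, Units.smul_def]
      rw [e1, e2]; exact h2
    exact spectrum.smul_mem_smul_iff.mp h7
  have h8 := hL.mem_spectrum_eq_re h6
  refine ⟨(μ⁻¹ * (z - 1)).re, ?_⟩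
  have heq : μ * (μ⁻¹ * (z - 1)) = z - 1 := by field_simp
  rw [← h8, heq]; ring

set_option maxHeartbeats 1000000 in
/-- For `0 < ρ < 1` and `λ` in the cardioid domain
`Card_ρ = {λ ∈ ℂ : λ ≠ 0, |arg λ| < π, |λ| < ρ·cos²((arg λ)/2)}`, and `L` a bounded
self-adjoint operator on a complex Hilbert space `H`, the operator
`√λ·(I + i·(√(2λ)/2)·L)⁻¹` is well defined and its operator norm is strictly
less than `√ρ`. -/
theorem stmt1 {H : Type*} [NormedAddCommGroup H] [InnerProductSpace ℂ H] [CompleteSpace H]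
    (ρ : ℝ) (hρ0 : 0 < ρ) (hρ1 : ρ < 1)
    (lam : ℂ) (hlam : lam ≠ 0) (harg : |lam.arg| < Real.pi)
    (hcard : ‖lam‖ < ρ * Real.cos (lam.arg / 2) ^ 2)
    (L : H →L[ℂ] H) (hL : IsSelfAdjoint L) :
    IsUnit (1 + ((Complex.I * (2 * lam) ^ (1 / 2 : ℂ)) / 2) • L) ∧
      ‖(lam ^ (1 / 2 : ℂ)) •
          Ring.inverse (1 + ((Complex.I * (2 * lam) ^ (1 / 2 : ℂ)) / 2) • L)‖
        < Real.sqrt ρ := by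
  have hπ := abs_lt.mp harg
  have hcosp : 0 < Real.cos (lam.arg / 2) := by
    apply Real.cos_pos_of_mem_Ioo
    constructor
    · linarith [Real.pi_pos]
    · linarith [Real.pi_pos]

  have hlpos : 0 < ‖lam‖ := by
    simpa using (norm_pos_iff.mpr hlam)
  set c := Real.cos (lam.arg / 2) with hcdef
  set r := Real.exp (Real.log (‖lam‖) / 2) with hrdef
  have hrpos : 0 < r := Real.exp_pos _
  have hrsq : r ^ 2 = ‖lam‖ := by
    rw [hrdef, sq, ← Real.exp_add, add_halves, Real.exp_log hlpos]
  -- components of s := lam ^ (1/2)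
  set s := lam ^ ((1:ℂ)/2) with hsdef
  have hscpow : s = Complex.exp (Complex.log lam * (1/2)) := Complex.cpow_def_of_ne_zero hlam _
  have hsre : s.re = r * c := by
    rw [hscpow, Complex.exp_re]
    congr 1
    · rw [hrdef]; congr 1
      simp [Complex.mul_re, Complex.log_re]
      ring
    · rw [hcdef]; congr 1
      simp [Complex.mul_im, Complex.log_im]
      ring
  have hsim : s.im = r * Real.sin (lam.arg / 2) := by
    rw [hscpow, Complex.exp_im]
    congr 1
    · rw [hrdef]; congr 1
      simp [Complex.mul_re, Complex.log_re]
      ring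
    · congr 1
      simp [Complex.mul_im, Complex.log_im]
      ring
  have hsne : s ≠ 0 := by
    rw [hsdef]
    simp [Complex.cpow_eq_zero_iff, hlam]
  have habs_s : ‖s‖ = r := by
    have h1 : (‖s‖) ^ 2 = r ^ 2 := by
      rw [Complex.sq_norm, Complex.normSq_apply, hsre, hsim]
      have := Real.sin_sq_add_cos_sq (lam.arg / 2)
      nlinarith
    nlinarith [norm_nonneg s]
  -- components of w2 := (2*lam) ^ (1/2)
  have h2l : (2 : ℂ) * lam ≠ 0 := by simp [hlam]
  have h2lpos : 0 < ‖2 * lam‖ := norm_pos_iff.mpr h2l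
  have habs2 : ‖2 * lam‖ = 2 * ‖lam‖ := by
    simp [map_mul]
  have harg2 : (2 * lam).arg = lam.arg := by
    have h : ((2:ℝ):ℂ) = 2 := by norm_num
    rw [← h, Complex.arg_real_mul _ (by norm_num)]
  set r2 := Real.exp (Real.log (‖2 * lam‖) / 2) with hr2def
  have hr2pos : 0 < r2 := Real.exp_pos _
  have hr2sq : r2 ^ 2 = 2 * ‖lam‖ := by
    rw [hr2def, sq, ← Real.exp_add, add_halves, Real.exp_log h2lpos, habs2]
  set w2 := ((2:ℂ) * lam) ^ ((1:ℂ)/2) with hw2def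
  have hw2cpow : w2 = Complex.exp (Complex.log (2 * lam) * (1/2)) :=
    Complex.cpow_def_of_ne_zero h2l _
  have hw2re : w2.re = r2 * c := by
    rw [hw2cpow, Complex.exp_re]
    congr 1
    · rw [hr2def]; congr 1
      simp [Complex.mul_re, Complex.log_re]
      ring
    · rw [hcdef]; congr 1
      simp [Complex.mul_im, Complex.log_im, harg2]
      ring
  have hw2im : w2.im = r2 * Real.sin (lam.arg / 2) := by
    rw [hw2cpow, Complex.exp_im]
    congr 1
    · rw [hr2def]; congr 1
      simp [Complex.mul_re, Complex.log_re]
      ring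
    · congr 1
      simp [Complex.mul_im, Complex.log_im, harg2]
      ring
  set μ := Complex.I * (2 * lam) ^ ((1:ℂ)/2) / 2 with hmudef
  have hμ : μ ≠ 0 := by
    rw [hmudef]
    simp [Complex.cpow_eq_zero_iff, hlam, Complex.I_ne_zero]
  clear_value c r r2 s w2 μ
  -- the key scalar inequality
  have key : ∀ t : ℝ, c ≤ ‖1 + μ * t‖ := by
    intro t
    have hmt : μ * (t:ℂ) = ((t/2 : ℝ) : ℂ) * (Complex.I * w2) := by
      rw [hmudef, hw2def]
      push_cast
      ring
    have hre : (1 + μ * (t:ℂ)).re = 1 - t/2 * w2.im := by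
      rw [Complex.add_re, hmt]
      simp [Complex.mul_re, Complex.mul_im]
      ring
    have him : (1 + μ * (t:ℂ)).im = t/2 * w2.re := by
      rw [Complex.add_im, hmt]
      simp [Complex.mul_re, Complex.mul_im]
    have habssq : (‖1 + μ * (t:ℂ)‖) ^ 2 = (1 - t/2 * w2.im)^2 + (t/2 * w2.re)^2 := by
      rw [Complex.sq_norm, Complex.normSq_apply, hre, him]
      ring
    have hpyth : Real.sin (lam.arg / 2) ^ 2 + c ^ 2 = 1 := by
      rw [hcdef]; exact Real.sin_sq_add_cos_sq _
    have hge : c ^ 2 ≤ (‖1 + μ * (t:ℂ)‖) ^ 2 := by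
      rw [habssq, hw2re, hw2im]
      nlinarith only [sq_nonneg (Real.sin (lam.arg / 2) - t/2 * r2), hpyth]
    nlinarith only [norm_nonneg (1 + μ * (t:ℂ)), hcosp, hge]
  -- spectrum of 1 + μ • L
  have hspec : ∀ z ∈ spectrum ℂ (1 + μ • L), c ≤ ‖z‖ := by
    intro z hz
    obtain ⟨t, rfl⟩ := aux_mem_spec L hL hμ hz
    exact key t
  have hunit : IsUnit (1 + μ • L) := by
    rw [← spectrum.zero_notMem_iff ℂ]
    intro h0
    have := hspec 0 h0
    simp only [norm_zero] at this
    linarith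
  refine ⟨hunit, ?_⟩
  set a := 1 + μ • L with hadef
  set x := Ring.inverse a with hxdef
  set b := s • x with hbdef
  clear_value a x b
  -- normality
  have hstara : star a = 1 + (starRingEnd ℂ μ) • L := by
    rw [hadef, star_add, star_one, star_smul, hL.star_eq]
    rfl
  have hcomm : a * star a = star a * a := by
    rw [hstara, hadef]
    simp only [add_mul, mul_add, one_mul, mul_one, smul_add, smul_mul_assoc, mul_smul_comm,
      smul_smul]
    rw [mul_comm ((starRingEnd ℂ) μ) μ]
    abel
  have hcommx : x * Ring.inverse (star a) = Ring.inverse (star a) * x := by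
    have hc1 : Commute (star a) a := hcomm.symm
    have hc2 : Commute a (star a) := hcomm
    rw [hxdef, ← Ring.mul_inverse_rev' hc1, ← Ring.mul_inverse_rev' hc2, hcomm]
  have hnormal : IsStarNormal b := by
    constructor
    show star b * b = b * star b
    have hsb : star b = (starRingEnd ℂ s) • Ring.inverse (star a) := by
      rw [hbdef, star_smul, hxdef, Ring.inverse_star]
      rfl
    rw [hsb, hbdef, smul_mul_assoc, smul_mul_assoc, mul_smul_comm, mul_smul_comm,
      smul_smul, smul_smul, mul_comm s ((starRingEnd ℂ) s), hcommx]
  -- all spectrum points of b are small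
  have hxu : x = ↑hunit.unit⁻¹ := by
    have h := Ring.inverse_unit hunit.unit
    rw [hunit.unit_spec] at h
    rw [hxdef, h]
  have hxunit : IsUnit x := by rw [hxu]; exact (hunit.unit⁻¹).isUnit
  have key2 : ∀ z ∈ spectrum ℂ b, ‖z‖ ≤ r / c := by
    intro z hz
    have hw : s⁻¹ * z ∈ spectrum ℂ x := by
      have h7 : (Units.mk0 s hsne) • (s⁻¹ * z) ∈ spectrum ℂ ((Units.mk0 s hsne) • x) := by
        have e1 : (Units.mk0 s hsne) • (s⁻¹ * z) = z := by
          rw [Units.smul_def, Units.val_mk0, smul_eq_mul]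
          field_simp
        have e2 : (Units.mk0 s hsne) • x = b := by
          rw [hbdef, Units.smul_def, Units.val_mk0]
        rw [e1, e2]; exact hz
      exact spectrum.smul_mem_smul_iff.mp h7
    have hwne : s⁻¹ * z ≠ 0 := by
      intro h0
      rw [h0] at hw
      exact spectrum.zero_notMem ℂ hxunit hw
    have hwinv : (s⁻¹ * z)⁻¹ ∈ spectrum ℂ a := by
      have h9 := (spectrum.inv_mem_iff (r := Units.mk0 _ hwne) (a := hunit.unit⁻¹)).mp
        (by rw [hxu] at hw; exact hw)
      simpa using h9
    have hcle := hspec _ hwinv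
    have hawpos : 0 < ‖s⁻¹ * z‖ := norm_pos_iff.mpr hwne
    rw [norm_inv, le_inv_comm₀ hcosp hawpos] at hcle
    have hz_eq : z = s * (s⁻¹ * z) := by field_simp
    calc ‖z‖ = ‖s‖ * ‖s⁻¹ * z‖ := by
          rw [← norm_mul, ← hz_eq]
      _ = r * ‖s⁻¹ * z‖ := by rw [habs_s]
      _ ≤ r * c⁻¹ := mul_le_mul_of_nonneg_left hcle hrpos.le
      _ = r / c := (div_eq_mul_inv r c).symm
  -- spectral radius argument
  have hsr : spectralRadius ℂ b = ‖b‖₊ := IsStarNormal.spectralRadius_eq_nnnorm b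
  have hub : spectralRadius ℂ b ≤ ENNReal.ofReal (r / c) := by
    rw [spectralRadius]
    refine iSup₂_le fun z hz => ?_
    rw [← ENNReal.ofReal_coe_nnreal, coe_nnnorm]
    exact ENNReal.ofReal_le_ofReal (by simpa using key2 z hz)
  have hbnorm : ‖b‖ ≤ r / c := by
    rw [hsr, ← ENNReal.ofReal_coe_nnreal, coe_nnnorm] at hub
    exact (ENNReal.ofReal_le_ofReal_iff (by positivity)).mp hub
  have hfin : r / c < Real.sqrt ρ := by
    rw [div_lt_iff₀ hcosp]
    have h1 : r < Real.sqrt (ρ * c ^ 2) := by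
      have hr' : r = Real.sqrt (r ^ 2) := (Real.sqrt_sq hrpos.le).symm
      rw [hr', hrsq]
      exact Real.sqrt_lt_sqrt (norm_nonneg lam) hcard
    have h2 : Real.sqrt (ρ * c ^ 2) = Real.sqrt ρ * c := by
      rw [Real.sqrt_mul hρ0.le, Real.sqrt_sq hcosp.le]
    linarith
  calc ‖b‖ ≤ r / c := hbnorm
    _ < Real.sqrt ρ := hfin
end

section
/- There exists a constant C > 0 such that for every natural number Λ, the vacuum tadpole Π^Λ = Σ_{m=0}^{Λ} (Σ_{q=0}^{Λ} 1/(m+q+1))² satisfies (log 2)²·(Λ+1) ≤ Π^Λ ≤ C·(Λ+1); i.e. Π^Λ grows linearly in the ultraviolet cutoff Λ. -/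
open Finset

private lemma aux_sqrt_sum (n : ℕ) :
    ∑ q ∈ range n, (1 : ℝ) / Real.sqrt (q + 1) ≤ 2 * Real.sqrt n := by
  induction n with
  | zero => simp
  | succ n ih =>
    rw [sum_range_succ]
    have hb : (0:ℝ) < Real.sqrt ((n:ℝ)+1) := Real.sqrt_pos.2 (by positivity)
    have h1 : Real.sqrt (n:ℝ) ^ 2 = (n:ℝ) := Real.sq_sqrt (by positivity)
    have h2 : Real.sqrt ((n:ℝ)+1) ^ 2 = (n:ℝ)+1 := Real.sq_sqrt (by positivity)
    have key : (1:ℝ) / Real.sqrt ((n:ℝ)+1)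
        ≤ 2 * Real.sqrt ((n:ℝ)+1) - 2 * Real.sqrt (n:ℝ) := by
      rw [div_le_iff₀ hb]
      nlinarith [sq_nonneg (Real.sqrt ((n:ℝ)+1) - Real.sqrt (n:ℝ))]
    push_cast
    linarith

private lemma aux_inv_sq_sum (a : ℝ) (ha : 1 ≤ a) (n : ℕ) :
    ∑ m ∈ range (n+1), 1 / ((m : ℝ) + a) ^ 2 ≤ 2 / a := by
  have ha0 : (0:ℝ) < a := lt_of_lt_of_le one_pos ha
  have key : ∀ k : ℕ,
      ∑ m ∈ range (k+1), 1 / ((m : ℝ) + a) ^ 2 ≤ 2 / a - 1 / ((k : ℝ) + a) := by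
    intro k
    induction k with
    | zero =>
      simp only [range_one, sum_singleton, Nat.cast_zero, zero_add]
      rw [div_sub_div _ _ (ne_of_gt ha0) (ne_of_gt ha0)]
      rw [div_le_div_iff₀ (by positivity) (by positivity)]
      nlinarith
    | succ k ih =>
      rw [sum_range_succ]
      have hk : (0:ℝ) < (k:ℝ) + a := by positivity
      have hk1 : (0:ℝ) < ((k:ℝ)+1) + a := by positivity
      have step : 1 / (((k:ℕ)+1 : ℕ) + a : ℝ) ^ 2
          ≤ 1 / ((k:ℝ) + a) - 1 / (((k:ℝ)+1) + a) := by
        push_cast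
        rw [div_sub_div _ _ (ne_of_gt hk) (ne_of_gt hk1)]
        rw [div_le_div_iff₀ (by positivity) (by positivity)]
        ring_nf
        nlinarith
      push_cast at step ⊢
      linarith
  calc ∑ m ∈ range (n+1), 1 / ((m : ℝ) + a) ^ 2 ≤ 2 / a - 1 / ((n : ℝ) + a) := key n
    _ ≤ 2 / a := by
        have : (0:ℝ) < (n:ℝ) + a := by positivity
        have : 0 ≤ 1 / ((n : ℝ) + a) := by positivity
        linarith

private lemma aux_lower (Λ m : ℕ) (hm : m ≤ Λ) :
    Real.log 2 ≤ ∑ q ∈ range (Λ+1), (1:ℝ) / (m + q + 1) := by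
  have tel := Finset.sum_range_sub (fun i : ℕ => Real.log ((m:ℝ) + i + 1)) (Λ+1)
  have hsum : Real.log ((m:ℝ) + (Λ+1:ℕ) + 1) - Real.log ((m:ℝ) + (0:ℕ) + 1)
      ≤ ∑ q ∈ range (Λ+1), (1:ℝ) / (m + q + 1) := by
    rw [← tel]
    apply Finset.sum_le_sum
    intro q _
    have hx : (0:ℝ) < (m:ℝ) + q + 1 := by positivity
    have hy : (0:ℝ) < (m:ℝ) + (q+1:ℕ) + 1 := by positivity
    have := Real.log_le_sub_one_of_pos (x := ((m:ℝ) + (q+1:ℕ) + 1) / ((m:ℝ) + q + 1))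
      (by positivity)
    rw [Real.log_div (ne_of_gt hy) (ne_of_gt hx)] at this
    have heq : ((m:ℝ) + (q+1:ℕ) + 1) / ((m:ℝ) + q + 1) - 1 = 1 / ((m:ℝ) + q + 1) := by
      push_cast
      field_simp
      ring
    linarith [this, heq ▸ this]
  refine le_trans ?_ hsum
  have h2 : (2:ℝ) ≤ ((m:ℝ) + (Λ+1:ℕ) + 1) / ((m:ℝ) + (0:ℕ) + 1) := by
    rw [le_div_iff₀ (by positivity)]
    push_cast
    have : (m:ℝ) ≤ (Λ:ℝ) := Nat.cast_le.2 hm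
    linarith
  have := Real.log_le_log (by norm_num) h2
  rw [Real.log_div (by positivity) (by positivity)] at this
  linarith


/-- There is a constant `C > 0` such that for every cutoff `Λ`, the
vacuum tadpole `Π^Λ = Σ_{m=0}^{Λ} (Σ_{q=0}^{Λ} 1/(m+q+1))²` satisfies
`(log 2)²·(Λ+1) ≤ Π^Λ ≤ C·(Λ+1)`: it grows linearly in `Λ`. -/
theorem stmt4 :
    ∃ C : ℝ, 0 < C ∧ ∀ Λ : ℕ,
      Real.log 2 ^ 2 * ((Λ : ℝ) + 1)
          ≤ ∑ m ∈ Finset.range (Λ + 1),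
              (∑ q ∈ Finset.range (Λ + 1), (1 : ℝ) / (m + q + 1)) ^ 2 ∧
        ∑ m ∈ Finset.range (Λ + 1),
            (∑ q ∈ Finset.range (Λ + 1), (1 : ℝ) / (m + q + 1)) ^ 2
          ≤ C * ((Λ : ℝ) + 1) := by
  refine ⟨8, by norm_num, fun Λ => ⟨?_, ?_⟩⟩
  · -- lower bound
    have hlog : 0 ≤ Real.log 2 := Real.log_nonneg one_le_two
    calc Real.log 2 ^ 2 * ((Λ : ℝ) + 1)
        = ∑ _m ∈ range (Λ+1), Real.log 2 ^ 2 := by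
          rw [Finset.sum_const, card_range]; push_cast; ring
      _ ≤ ∑ m ∈ range (Λ+1), (∑ q ∈ range (Λ+1), (1:ℝ) / (m + q + 1)) ^ 2 := by
          apply Finset.sum_le_sum
          intro m hm
          have hml : m ≤ Λ := Nat.lt_succ_iff.1 (mem_range.1 hm)
          exact pow_le_pow_left₀ hlog (aux_lower Λ m hml) 2
  · -- upper bound
    set s : ℕ → ℝ := fun q => Real.sqrt (Real.sqrt ((q:ℝ)+1)) with hs
    have hspos : ∀ q : ℕ, 0 < s q := fun q =>
      Real.sqrt_pos.2 (Real.sqrt_pos.2 (by positivity))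
    have hssq : ∀ q : ℕ, s q ^ 2 = Real.sqrt ((q:ℝ)+1) := fun q =>
      Real.sq_sqrt (Real.sqrt_nonneg _)
    have hA : ∑ q ∈ range (Λ+1), (1:ℝ) / s q ^ 2 ≤ 2 * Real.sqrt ((Λ:ℝ)+1) := by
      have := aux_sqrt_sum (Λ+1)
      push_cast at this
      simp_rw [hssq]
      exact this
    -- Cauchy–Schwarz per m
    have hCS : ∀ m : ℕ, (∑ q ∈ range (Λ+1), (1:ℝ) / (m + q + 1)) ^ 2
        ≤ 2 * Real.sqrt ((Λ:ℝ)+1) *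
          ∑ q ∈ range (Λ+1), Real.sqrt ((q:ℝ)+1) / ((m:ℝ) + q + 1) ^ 2 := by
      intro m
      have hfg : ∀ q ∈ range (Λ+1),
          (1:ℝ) / (m + q + 1) = (1 / s q) * (s q / ((m:ℝ) + q + 1)) := by
        intro q _
        have := (hspos q).ne'
        field_simp
      rw [Finset.sum_congr rfl hfg]
      calc (∑ q ∈ range (Λ+1), (1 / s q) * (s q / ((m:ℝ) + q + 1))) ^ 2
          ≤ (∑ q ∈ range (Λ+1), (1 / s q) ^ 2) *
            ∑ q ∈ range (Λ+1), (s q / ((m:ℝ) + q + 1)) ^ 2 :=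
            Finset.sum_mul_sq_le_sq_mul_sq _ _ _
        _ ≤ 2 * Real.sqrt ((Λ:ℝ)+1) *
            ∑ q ∈ range (Λ+1), Real.sqrt ((q:ℝ)+1) / ((m:ℝ) + q + 1) ^ 2 := by
            have he1 : ∑ q ∈ range (Λ+1), ((1:ℝ) / s q) ^ 2
                = ∑ q ∈ range (Λ+1), (1:ℝ) / s q ^ 2 := by
              apply Finset.sum_congr rfl; intro q _; rw [div_pow, one_pow]
            have he2 : ∑ q ∈ range (Λ+1), (s q / ((m:ℝ) + q + 1)) ^ 2
                = ∑ q ∈ range (Λ+1), Real.sqrt ((q:ℝ)+1) / ((m:ℝ) + q + 1) ^ 2 := by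
              apply Finset.sum_congr rfl; intro q _; rw [div_pow, hssq]
            rw [he1, he2]
            apply mul_le_mul_of_nonneg_right hA
            apply Finset.sum_nonneg
            intro q _
            positivity
    calc ∑ m ∈ range (Λ+1), (∑ q ∈ range (Λ+1), (1:ℝ) / (m + q + 1)) ^ 2
        ≤ ∑ m ∈ range (Λ+1), 2 * Real.sqrt ((Λ:ℝ)+1) *
            ∑ q ∈ range (Λ+1), Real.sqrt ((q:ℝ)+1) / ((m:ℝ) + q + 1) ^ 2 :=
          Finset.sum_le_sum fun m _ => hCS m
      _ = 2 * Real.sqrt ((Λ:ℝ)+1) *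
            ∑ q ∈ range (Λ+1), ∑ m ∈ range (Λ+1),
              Real.sqrt ((q:ℝ)+1) / ((m:ℝ) + q + 1) ^ 2 := by
          rw [← Finset.mul_sum, Finset.sum_comm]
      _ ≤ 2 * Real.sqrt ((Λ:ℝ)+1) *
            ∑ q ∈ range (Λ+1), 2 / Real.sqrt ((q:ℝ)+1) := by
          apply mul_le_mul_of_nonneg_left _ (by positivity)
          apply Finset.sum_le_sum
          intro q _
          have hq1 : (1:ℝ) ≤ (q:ℝ) + 1 := le_add_of_nonneg_left (Nat.cast_nonneg q)
          have hinner : ∑ m ∈ range (Λ+1), 1 / ((m:ℝ) + ((q:ℝ)+1)) ^ 2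
              ≤ 2 / ((q:ℝ)+1) := aux_inv_sq_sum ((q:ℝ)+1) hq1 Λ
          have hrw : ∑ m ∈ range (Λ+1), Real.sqrt ((q:ℝ)+1) / ((m:ℝ) + q + 1) ^ 2
              = Real.sqrt ((q:ℝ)+1) * ∑ m ∈ range (Λ+1), 1 / ((m:ℝ) + ((q:ℝ)+1)) ^ 2 := by
            rw [Finset.mul_sum]
            apply Finset.sum_congr rfl
            intro m _
            rw [mul_one_div]
            ring_nf
          rw [hrw]
          have hsq : Real.sqrt ((q:ℝ)+1) * (2 / ((q:ℝ)+1)) = 2 / Real.sqrt ((q:ℝ)+1) := by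
            have h : Real.sqrt ((q:ℝ)+1) ^ 2 = (q:ℝ)+1 := Real.sq_sqrt (by positivity)
            have hpos : (0:ℝ) < Real.sqrt ((q:ℝ)+1) := Real.sqrt_pos.2 (by positivity)
            field_simp
            nlinarith [h]
          calc Real.sqrt ((q:ℝ)+1) * ∑ m ∈ range (Λ+1), 1 / ((m:ℝ) + ((q:ℝ)+1)) ^ 2
              ≤ Real.sqrt ((q:ℝ)+1) * (2 / ((q:ℝ)+1)) :=
                mul_le_mul_of_nonneg_left hinner (Real.sqrt_nonneg _)
            _ = 2 / Real.sqrt ((q:ℝ)+1) := hsq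
      _ ≤ 2 * Real.sqrt ((Λ:ℝ)+1) * (2 * (2 * Real.sqrt ((Λ:ℝ)+1))) := by
          apply mul_le_mul_of_nonneg_left _ (by positivity)
          have : ∑ q ∈ range (Λ+1), 2 / Real.sqrt ((q:ℝ)+1)
              = 2 * ∑ q ∈ range (Λ+1), 1 / Real.sqrt ((q:ℝ)+1) := by
            rw [Finset.mul_sum]; apply Finset.sum_congr rfl; intro q _; ring
          rw [this]
          have h2 := aux_sqrt_sum (Λ+1)
          push_cast at h2
          linarith
      _ = 8 * ((Λ:ℝ) + 1) := by
          have h : Real.sqrt ((Λ:ℝ)+1) ^ 2 = (Λ:ℝ)+1 := Real.sq_sqrt (by positivity)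
          nlinarith [h]
end

section
/- (Nelson's bound) Let T be a Hermitian N×N complex matrix, let μ be a probability measure on the real vector space of Hermitian N×N complex matrices, and let λ ∈ ℂ with Re λ ≥ 0. Then the partition-function integral satisfies |∫ exp(−(λ/4)·(Tr(φ⁴) − 4·Tr(φ²·T) + 2·Tr(T²))) dμ(φ)| ≤ exp((Re λ/2)·Re(Tr(T²))). -/
open MeasureTheory

/-- Matrices over a measurable space form a measurable space (entrywise). -/
instance matrixMeasurableSpace {m n α : Type*} [MeasurableSpace α] :
    MeasurableSpace (Matrix m n α) :=
  MeasurableSpace.pi (X := fun _ : m => n → α)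

lemma herm_trace_sq {N : ℕ} {A : Matrix (Fin N) (Fin N) ℂ} (hA : A.IsHermitian) :
    (A ^ 2).trace.im = 0 ∧ 0 ≤ (A ^ 2).trace.re := by
  have h : (A ^ 2).trace = ((∑ i, ∑ j, Complex.normSq (A i j) : ℝ) : ℂ) := by
    rw [sq, Matrix.trace]
    push_cast
    refine Finset.sum_congr rfl fun i _ => ?_
    rw [Matrix.diag_apply, Matrix.mul_apply]
    refine Finset.sum_congr rfl fun j _ => ?_
    rw [← hA.apply j i]
    simp [Complex.star_def, Complex.mul_conj]
  constructor
  · rw [h]; simp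
  · rw [h]
    simp only [Complex.ofReal_re]
    exact Finset.sum_nonneg fun i _ => Finset.sum_nonneg fun j _ => Complex.normSq_nonneg _

/-- **Nelson's bound.** Let `T` be a Hermitian `N×N` complex matrix, `μ` a
probability measure on Hermitian `N×N` matrices, and `λ ∈ ℂ` with `Re λ ≥ 0`. Then
`|∫ exp(−(λ/4)·(Tr(φ⁴) − 4·Tr(φ²·T) + 2·Tr(T²))) dμ(φ)| ≤ exp((Re λ/2)·Re(Tr(T²)))`. -/
theorem stmt7 {N : ℕ} (T : Matrix (Fin N) (Fin N) ℂ) (hT : T.IsHermitian)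
    (μ : Measure (Matrix (Fin N) (Fin N) ℂ)) [IsProbabilityMeasure μ]
    (hμ : ∀ᵐ φ ∂μ, Matrix.IsHermitian φ)
    (lam : ℂ) (hlam : 0 ≤ lam.re) :
    ‖∫ φ, Complex.exp (-(lam / 4) *
        ((φ ^ 4).trace - 4 * (φ ^ 2 * T).trace + 2 * (T ^ 2).trace)) ∂μ‖
      ≤ Real.exp (lam.re / 2 * ((T ^ 2).trace).re) := by
  have key := MeasureTheory.norm_integral_le_of_norm_le_const
    (μ := μ) (C := Real.exp (lam.re / 2 * ((T ^ 2).trace).re))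
    (f := fun φ => Complex.exp (-(lam / 4) *
        ((φ ^ 4).trace - 4 * (φ ^ 2 * T).trace + 2 * (T ^ 2).trace)))
    ?_
  · simpa using key
  · filter_upwards [hμ] with φ hφ
    set E : ℂ := (φ ^ 4).trace - 4 * (φ ^ 2 * T).trace + 2 * (T ^ 2).trace with hE
    have hA : (φ ^ 2 - (T + T)).IsHermitian := by
      unfold Matrix.IsHermitian at *
      simp [Matrix.conjTranspose_pow, hφ, hT]
    have hsq : (φ ^ 2 - (T + T)) ^ 2
        = φ ^ 4 - ((φ ^ 2 * T) + (φ ^ 2 * T)) - ((T * φ ^ 2) + (T * φ ^ 2))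
          + (T ^ 2 + T ^ 2 + T ^ 2 + T ^ 2) := by
      noncomm_ring
    have htr : ((φ ^ 2 - (T + T)) ^ 2).trace = E + 2 * (T ^ 2).trace := by
      rw [hsq]
      simp only [Matrix.trace_add, Matrix.trace_sub, Matrix.trace_mul_comm T (φ ^ 2)]
      rw [hE]; ring
    obtain ⟨him, hre⟩ := herm_trace_sq hA
    obtain ⟨himT, _⟩ := herm_trace_sq hT
    have h2 := congrArg Complex.im htr
    have h3 := congrArg Complex.re htr
    simp only [Complex.add_im, Complex.mul_im, Complex.re_ofNat, Complex.im_ofNat,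
      him, himT, mul_zero, zero_mul, add_zero, zero_add] at h2
    simp only [Complex.add_re, Complex.mul_re, Complex.re_ofNat, Complex.im_ofNat,
      himT, mul_zero, zero_mul, sub_zero] at h3
    have hEim : E.im = 0 := by linarith
    have hEre : -2 * ((T ^ 2).trace).re ≤ E.re := by linarith
    rw [Complex.norm_exp]
    apply Real.exp_le_exp.2
    have h4 : -(lam / 4) * E = (((-1 : ℝ) / 4 : ℝ) : ℂ) * (lam * E) := by
      push_cast; ring
    rw [h4, Complex.re_ofReal_mul, Complex.mul_re, hEim, mul_zero, sub_zero]
    nlinarith [hEre, hlam]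
end

section
/- Let M ≥ 2 and j ≥ 0 be integers and let ω be an integer with M^j ≤ ω ≤ M^{j+1} − 1. Then the double sum Σ_{m=M^j}^{ω} Σ_{p=0}^{ω−m} 1/(m+p+1) is at most (1 + log M)·(ω + 1); consequently the trace (1/(ω+1))·Σ_{m=M^j}^{ω} Σ_{p=0}^{ω−m} 1/(m+p+1) of the sliced quadratic kernel at refined scale ω is bounded by 1 + log M, uniformly in j and ω. -/
open Finset

lemma one_div_le_log_sub (k : ℕ) (hk : 1 ≤ k) :
    (1 : ℝ) / (k + 1) ≤ Real.log (k + 1) - Real.log k := by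
  have hk0 : (0 : ℝ) < k := by exact_mod_cast hk
  have hk1 : (0 : ℝ) < k + 1 := by positivity
  have h := Real.log_le_sub_one_of_pos (x := (k : ℝ) / (k + 1)) (by positivity)
  rw [Real.log_div (ne_of_gt hk0) (ne_of_gt hk1)] at h
  have : (k : ℝ) / (k + 1) - 1 = -(1 / (k + 1)) := by field_simp; ring
  rw [this] at h
  linarith

lemma inner_sum_le (m ω : ℕ) (hm : 1 ≤ m) (hmω : m ≤ ω) :
    ∑ p ∈ range (ω - m + 1), (1 : ℝ) / (m + p + 1)
      ≤ Real.log (ω + 1) - Real.log m := by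
  have h1 : ∑ p ∈ range (ω - m + 1), (1 : ℝ) / (m + p + 1)
      ≤ ∑ p ∈ range (ω - m + 1),
          (Real.log ((m + (p + 1) : ℕ) : ℝ) - Real.log ((m + p : ℕ) : ℝ)) := by
    apply Finset.sum_le_sum
    intro p _
    have := one_div_le_log_sub (m + p) (le_trans hm (Nat.le_add_right m p))
    push_cast at this ⊢
    convert this using 2
    exacts [rfl, by ring_nf]
  have h2 : ∑ p ∈ range (ω - m + 1),
        (Real.log ((m + (p + 1) : ℕ) : ℝ) - Real.log ((m + p : ℕ) : ℝ))
      = Real.log ((m + (ω - m + 1) : ℕ) : ℝ) - Real.log ((m + 0 : ℕ) : ℝ) :=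
    Finset.sum_range_sub (fun p => Real.log ((m + p : ℕ) : ℝ)) (ω - m + 1)
  have h3 : m + (ω - m + 1) = ω + 1 := by omega
  calc _ ≤ _ := h1
    _ = Real.log (ω + 1) - Real.log m := by
        rw [h2, h3]; push_cast; ring_nf

/-- For integers `M ≥ 2`, `j ≥ 0` and a refined scale
`ω ∈ [M^j, M^{j+1}−1]`, the double sum `Σ_{m=M^j}^{ω} Σ_{p=0}^{ω−m} 1/(m+p+1)` is at most
`(1 + log M)·(ω+1)`; consequently the trace
`(1/(ω+1))·Σ_{m=M^j}^{ω} Σ_{p=0}^{ω−m} 1/(m+p+1)` of the sliced quadratic kernel is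
bounded by `1 + log M`, uniformly in `j` and `ω`. -/
theorem stmt16 (M j ω : ℕ) (hM : 2 ≤ M) (hlo : M ^ j ≤ ω) (hhi : ω ≤ M ^ (j + 1) - 1) :
    (∑ m ∈ Finset.Icc (M ^ j) ω, ∑ p ∈ Finset.range (ω - m + 1), (1 : ℝ) / (m + p + 1))
        ≤ (1 + Real.log M) * ((ω : ℝ) + 1) ∧
      (1 / ((ω : ℝ) + 1)) *
          ∑ m ∈ Finset.Icc (M ^ j) ω, ∑ p ∈ Finset.range (ω - m + 1), (1 : ℝ) / (m + p + 1)
        ≤ 1 + Real.log M := by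
  have hMj : 1 ≤ M ^ j := Nat.one_le_pow _ _ (by omega)
  have hω1 : (ω : ℕ) + 1 ≤ M ^ (j + 1) := by
    have : 1 ≤ M ^ (j + 1) := Nat.one_le_pow _ _ (by omega)
    omega
  have hlogM : 0 ≤ Real.log M := Real.log_nonneg (by exact_mod_cast (by omega : 1 ≤ M))
  have key : (∑ m ∈ Finset.Icc (M ^ j) ω, ∑ p ∈ Finset.range (ω - m + 1),
      (1 : ℝ) / (m + p + 1)) ≤ ((ω : ℝ) + 1) * Real.log M := by
    have step : ∀ m ∈ Finset.Icc (M ^ j) ω,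
        ∑ p ∈ Finset.range (ω - m + 1), (1 : ℝ) / (m + p + 1) ≤ Real.log M := by
      intro m hm
      rw [Finset.mem_Icc] at hm
      have h1 : 1 ≤ m := le_trans hMj hm.1
      refine (inner_sum_le m ω h1 hm.2).trans ?_
      have hA : Real.log ((ω : ℝ) + 1) ≤ Real.log (M ^ (j + 1)) := by
        apply Real.log_le_log (by positivity)
        exact_mod_cast hω1
      have hB : Real.log ((M : ℝ) ^ j) ≤ Real.log m := by
        apply Real.log_le_log (by positivity)
        exact_mod_cast hm.1
      have hC : Real.log ((M : ℝ) ^ (j + 1)) = (j + 1) * Real.log M := by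
        rw [Real.log_pow]; push_cast; ring
      have hD : Real.log ((M : ℝ) ^ j) = j * Real.log M := by
        rw [Real.log_pow]
      push_cast at hA
      nlinarith
    calc (∑ m ∈ Finset.Icc (M ^ j) ω, ∑ p ∈ Finset.range (ω - m + 1), (1 : ℝ) / (m + p + 1))
        ≤ ∑ m ∈ Finset.Icc (M ^ j) ω, Real.log M := Finset.sum_le_sum step
      _ = ((Finset.Icc (M ^ j) ω).card : ℝ) * Real.log M := by
          rw [Finset.sum_const, nsmul_eq_mul]
      _ ≤ ((ω : ℝ) + 1) * Real.log M := by
          apply mul_le_mul_of_nonneg_right _ hlogM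
          rw [Nat.card_Icc]
          have : ω + 1 - M ^ j ≤ ω + 1 := by omega
          exact_mod_cast this
  have hpos : (0 : ℝ) < (ω : ℝ) + 1 := by positivity
  constructor
  · calc _ ≤ ((ω : ℝ) + 1) * Real.log M := key
      _ ≤ (1 + Real.log M) * ((ω : ℝ) + 1) := by nlinarith
  · rw [one_div, inv_mul_le_iff₀ hpos]
    calc _ ≤ ((ω : ℝ) + 1) * Real.log M := key
      _ ≤ ((ω : ℝ) + 1) * (1 + Real.log M) := by nlinarith
end
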